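/- Say that a ℂ-linear map φ : T → T is represented by a matrix quadruple (A,B,C,D), with A,B,C,D : ℕ×ℕ → ℂ, if every row of A is finitely supported, every column of D is finitely supported, C has only finitely many nonzero entries (B is arbitrary), and φ(ω,u) = (i ↦ Σ_j A(i,j)ω(j) + Σ_j B(i,j)u(j), i ↦ Σ_j C(i,j)ω(j) + Σ_j D(i,j)u(j)) for all (ω,u) ∈ T, all sums being finite and the second component being finitely supported. Then a ℂ-linear automorphism φ of T admits a ℂ-linear automorphism φ̄ of R with (φ,φ̄) ∈ G(T,R) if and only if both φ and φ^{-1} are represented by such matrix quadruples. -/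

import Mathlib

open Module Submodule

noncomputable section

abbrev TT : Type := (ℕ → ℂ) × (ℕ →₀ ℂ)
abbrev RR : Type := (ℕ →₀ ℂ) × (ℕ → ℂ)

lemma lc_v_add (v w : ℕ → ℂ) (l : ℕ →₀ ℂ) :
    Finsupp.linearCombination ℂ (v + w) l
      = Finsupp.linearCombination ℂ v l + Finsupp.linearCombination ℂ w l := by
  classical
  simp only [Finsupp.linearCombination_apply]
  rw [← Finsupp.sum_add]
  exact Finsupp.sum_congr fun i _ => by simp [Pi.add_apply, smul_add, mul_add]

lemma lc_v_smul (c : ℂ) (v : ℕ → ℂ) (l : ℕ →₀ ℂ) :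
    Finsupp.linearCombination ℂ (c • v) l = c • Finsupp.linearCombination ℂ v l := by
  classical
  simp only [Finsupp.linearCombination_apply, Finsupp.smul_sum]
  exact Finsupp.sum_congr fun i _ => by simp [Pi.smul_apply, smul_comm, smul_eq_mul, mul_left_comm]

/-- The nondegenerate pairing `p : T × R → ℂ`,
`p((ω,u),(w,ν)) = Σ_i ω(i)w(i) + Σ_i u(i)ν(i)`. -/
def pairB : TT →ₗ[ℂ] RR →ₗ[ℂ] ℂ :=
  LinearMap.mk₂ ℂ
    (fun x y => Finsupp.linearCombination ℂ x.1 y.1 + Finsupp.linearCombination ℂ y.2 x.2)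
    (fun x x' y => by
      simp only [Prod.fst_add, Prod.snd_add, lc_v_add, map_add]; ring)
    (fun c x y => by
      simp only [Prod.smul_fst, Prod.smul_snd, lc_v_smul, map_smul, smul_add])
    (fun x y y' => by
      simp only [Prod.fst_add, Prod.snd_add, lc_v_add, map_add]; ring)
    (fun c x y => by
      simp only [Prod.smul_fst, Prod.smul_snd, lc_v_smul, map_smul, smul_add])

/-- The Mackey-group condition on a pair of automorphisms:
`p(φ x, y) = p(x, φ̄ y)` for all `x ∈ T`, `y ∈ R`. -/
def IsMackey (φ : TT ≃ₗ[ℂ] TT) (ψ : RR ≃ₗ[ℂ] RR) : Prop :=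
  ∀ (x : TT) (y : RR), pairB (φ x) y = pairB x (ψ y)

/-- `W^♯ = (ℕ→ℂ) × {0} ⊆ T`. -/
def Wsharp : Submodule ℂ TT := LinearMap.range (LinearMap.inl ℂ (ℕ → ℂ) (ℕ →₀ ℂ))

/-- `U^♯ = {0} × (ℕ→ℂ) ⊆ R`. -/
def Usharp : Submodule ℂ RR := LinearMap.range (LinearMap.inr ℂ (ℕ →₀ ℂ) (ℕ → ℂ))

/-- `V = (ℕ→₀ℂ) × (ℕ→₀ℂ) ⊆ T`. -/
def Vsub : Submodule ℂ TT :=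
  LinearMap.range
    ((Finsupp.lcoeFun : (ℕ →₀ ℂ) →ₗ[ℂ] (ℕ → ℂ)).prodMap
      (LinearMap.id : (ℕ →₀ ℂ) →ₗ[ℂ] (ℕ →₀ ℂ)))

/-- `W = (ℕ→₀ℂ) × {0} ⊆ T`. -/
def Wsub : Submodule ℂ TT :=
  LinearMap.range
    ((LinearMap.inl ℂ (ℕ → ℂ) (ℕ →₀ ℂ)).comp
      (Finsupp.lcoeFun : (ℕ →₀ ℂ) →ₗ[ℂ] (ℕ → ℂ)))

/-- `π_U : T → (ℕ→₀ℂ)`, the second projection. -/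
def piU : TT →ₗ[ℂ] (ℕ →₀ ℂ) := LinearMap.snd ℂ (ℕ → ℂ) (ℕ →₀ ℂ)

/-- `π_{W*} : R → (ℕ→₀ℂ)`, the first projection. -/
def piW : RR →ₗ[ℂ] (ℕ →₀ ℂ) := LinearMap.fst ℂ (ℕ →₀ ℂ) (ℕ → ℂ)

/-- The degree `d(φ) = dim π_U(φ(W^♯)) − dim π_U(φ^{-1}(W^♯))`. -/
def deg (φ : TT ≃ₗ[ℂ] TT) : ℤ :=
  (Module.finrank ℂ ((Wsharp.map φ.toLinearMap).map piU) : ℤ) -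
    (Module.finrank ℂ ((Wsharp.map φ.symm.toLinearMap).map piU) : ℤ)

/-- `span {(δ_i, 0) : i ≥ n} ⊆ T`. -/
def tailSpan (n : ℕ) : Submodule ℂ TT :=
  Submodule.span ℂ
    ((fun i => ((((Finsupp.single i (1 : ℂ)) : ℕ →₀ ℂ) : ℕ → ℂ), (0 : ℕ →₀ ℂ))) '' {i | n ≤ i})

/-- `W'` is E-commensurable of index `k` with `W`:
`W' = G ⊕ span{(δ_i,0) : i ≥ n}` with `G ⊆ V` finite-dimensional of dimension `n + k`. -/
def Ecomm (W' : Submodule ℂ TT) (k : ℤ) : Prop :=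
  ∃ (n : ℕ) (G : Submodule ℂ TT), G ≤ Vsub ∧ FiniteDimensional ℂ G ∧
    (Module.finrank ℂ G : ℤ) = (n : ℤ) + k ∧ Disjoint G (tailSpan n) ∧
    W' = G ⊔ tailSpan n

/-- `W'^⊥ = {y ∈ R : p(x,y) = 0 for all x ∈ W'}`. -/
def perpR (W' : Submodule ℂ TT) : Submodule ℂ RR :=
  ⨅ x ∈ (W' : Set TT), LinearMap.ker (pairB x)

/-- `Y^⊥ = {x ∈ T : p(x,y) = 0 for all y ∈ Y}`. -/
def perpT (Y : Submodule ℂ RR) : Submodule ℂ TT :=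
  ⨅ y ∈ (Y : Set RR), LinearMap.ker (pairB.flip y)

/-- The action `φ·W' = φ((W'^⊥)^⊥) ∩ V`. -/
def actOn (φ : TT ≃ₗ[ℂ] TT) (W' : Submodule ℂ TT) : Submodule ℂ TT :=
  ((perpT (perpR W')).map φ.toLinearMap) ⊓ Vsub

end


/-- `φ : T → T` is represented by the matrix quadruple `(A,B,C,D)`: the rows of `A` are
finitely supported, the columns of `D` are finitely supported, `C` has finitely many nonzero
entries, and `φ` acts by the usual matrix formula (all sums finite). -/
def RepBy (φ : TT →ₗ[ℂ] TT) (A B C D : ℕ → ℕ → ℂ) : Prop :=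
  (∀ i, {j | A i j ≠ 0}.Finite) ∧
  (∀ j, {i | D i j ≠ 0}.Finite) ∧
  {q : ℕ × ℕ | C q.1 q.2 ≠ 0}.Finite ∧
  ∀ x : TT,
    (∀ i, (φ x).1 i = (∑ᶠ j, A i j * x.1 j) + ∑ᶠ j, B i j * x.2 j) ∧
    (∀ i, (φ x).2 i = (∑ᶠ j, C i j * x.1 j) + ∑ᶠ j, D i j * x.2 j)

section MyAux

open Finsupp Polynomial

noncomputable section

/-! ### Basic lemmas about the pairing -/

lemma lc_finsum (v : ℕ → ℂ) (l : ℕ →₀ ℂ) :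
    Finsupp.linearCombination ℂ v l = ∑ᶠ j, l j * v j := by
  classical
  rw [Finsupp.linearCombination_apply, Finsupp.sum,
    finsum_eq_sum_of_support_subset (fun j => l j * v j) (s := l.support)]
  · simp [smul_eq_mul]
  · intro j hj
    simp only [Function.mem_support, ne_eq] at hj
    simp only [Finset.coe_subset, Finset.mem_coe, Finsupp.mem_support_iff]
    intro h; exact hj (by simp [h])

lemma lc_sum (v : ℕ → ℂ) (l : ℕ →₀ ℂ) :
    Finsupp.linearCombination ℂ v l = ∑ i ∈ l.support, l i * v i := by
  rw [Finsupp.linearCombination_apply, Finsupp.sum]; simp [smul_eq_mul]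

lemma lc_single' (v : ℕ → ℂ) (k : ℕ) :
    Finsupp.linearCombination ℂ v (Finsupp.single k 1) = v k := by simp

lemma lc_single_fun (y : ℕ →₀ ℂ) (k : ℕ) :
    Finsupp.linearCombination ℂ (((Finsupp.single k 1 : ℕ →₀ ℂ) : ℕ → ℂ)) y = y k := by
  classical
  rw [lc_finsum, finsum_eq_single _ k]
  · simp
  · intro b hb; simp [Finsupp.single_apply, (Ne.symm hb)]

/-- basis-like elements of `TT` and `RR` -/
def eT (j : ℕ) : TT := (((Finsupp.single j 1 : ℕ →₀ ℂ) : ℕ → ℂ), 0)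
def fT (j : ℕ) : TT := (0, Finsupp.single j 1)
def eR (k : ℕ) : RR := (Finsupp.single k 1, 0)
def fR (k : ℕ) : RR := (0, ((Finsupp.single k 1 : ℕ →₀ ℂ) : ℕ → ℂ))

lemma pairB_apply (x : TT) (y : RR) :
    pairB x y = Finsupp.linearCombination ℂ x.1 y.1
      + Finsupp.linearCombination ℂ y.2 x.2 := rfl

lemma pairB_eR (x : TT) (k : ℕ) : pairB x (eR k) = x.1 k := by
  simp [pairB_apply, eR, lc_single']

lemma pairB_fR (x : TT) (k : ℕ) : pairB x (fR k) = x.2 k := by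
  simp [pairB_apply, fR, lc_single_fun]

lemma pairB_eT (y : RR) (k : ℕ) : pairB (eT k) y = y.1 k := by
  simp [pairB_apply, eT, lc_single_fun]

lemma pairB_fT (y : RR) (k : ℕ) : pairB (fT k) y = y.2 k := by
  simp [pairB_apply, fT, lc_single']

lemma pairB_right_inj {y y' : RR} (h : ∀ x, pairB x y = pairB x y') : y = y' := by
  ext k
  · have := h (eT k); rwa [pairB_eT, pairB_eT] at this
  · have := h (fT k); rwa [pairB_fT, pairB_fT] at this

/-! ### Forward direction -/

theorem rep_of_mackey (φ : TT ≃ₗ[ℂ] TT) (ψ : RR ≃ₗ[ℂ] RR) (hM : IsMackey φ ψ) :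
    ∃ A B C D, RepBy φ.toLinearMap A B C D := by
  classical
  set A : ℕ → ℕ → ℂ := fun i j => (ψ (eR i)).1 j with hAdef
  set B : ℕ → ℕ → ℂ := fun i j => (ψ (eR i)).2 j with hBdef
  set C : ℕ → ℕ → ℂ := fun i j => (ψ (fR i)).1 j with hCdef
  set D : ℕ → ℕ → ℂ := fun i j => (ψ (fR i)).2 j with hDdef
  -- the two formulas
  have f1 : ∀ (x : TT) (i : ℕ),
      (φ x).1 i = (∑ᶠ j, A i j * x.1 j) + ∑ᶠ j, B i j * x.2 j := by
    intro x i
    have := hM x (eR i)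
    rw [pairB_eR] at this
    rw [this, pairB_apply, lc_finsum, lc_finsum]
    congr 1
    · exact finsum_congr fun j => mul_comm _ _
  have f2 : ∀ (x : TT) (i : ℕ),
      (φ x).2 i = (∑ᶠ j, C i j * x.1 j) + ∑ᶠ j, D i j * x.2 j := by
    intro x i
    have := hM x (fR i)
    rw [pairB_fR] at this
    rw [this, pairB_apply, lc_finsum, lc_finsum]
    congr 1
    · exact finsum_congr fun j => mul_comm _ _
  -- values of the matrices
  have vD : ∀ i j, D i j = (φ (fT j)).2 i := by
    intro i j
    rw [f2 (fT j) i]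
    have h1 : (∑ᶠ k, C i k * (fT j).1 k) = 0 :=
      finsum_eq_zero_of_forall_eq_zero fun k => by simp [fT]
    have h2 : (∑ᶠ k, D i k * ((fT j).2 : ℕ → ℂ) k) = D i j := by
      rw [finsum_eq_single _ j]
      · simp [fT]
      · intro b hb; simp [fT, Finsupp.single_apply, Ne.symm hb]
    rw [h1, h2, zero_add]
  have vC : ∀ i j, C i j = (φ (eT j)).2 i := by
    intro i j
    rw [f2 (eT j) i]
    have h2 : (∑ᶠ k, D i k * ((eT j).2 : ℕ → ℂ) k) = 0 :=
      finsum_eq_zero_of_forall_eq_zero fun k => by simp [eT]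
    have h1 : (∑ᶠ k, C i k * (eT j).1 k) = C i j := by
      rw [finsum_eq_single _ j]
      · simp [eT]
      · intro b hb; simp [eT, Finsupp.single_apply, Ne.symm hb]
    rw [h1, h2, add_zero]
  -- finiteness of rows of A
  have hA : ∀ i, {j | A i j ≠ 0}.Finite := by
    intro i
    exact Set.Finite.subset ((ψ (eR i)).1.support : Finset ℕ).finite_toSet
      (fun j hj => by simpa [Finsupp.mem_support_iff] using hj)
  -- finiteness of columns of D
  have hD : ∀ j, {i | D i j ≠ 0}.Finite := by
    intro j
    refine Set.Finite.subset ((φ (fT j)).2.support : Finset ℕ).finite_toSet ?_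
    intro i hi
    simp only [Set.mem_setOf_eq, vD] at hi
    simpa [Finsupp.mem_support_iff] using hi
  -- finiteness of C : the polynomial argument
  set c : ℕ → (ℕ →₀ ℂ) := fun j => (φ (eT j)).2 with hcdef
  have hPeval : ∀ (t : ℂ) (j : ℕ),
      Polynomial.eval t (⟨AddMonoidAlgebra.ofCoeff (c j)⟩ : Polynomial ℂ) = (ψ (0, fun i => t ^ i)).1 j := by
    intro t j
    have h := hM (eT j) (0, fun i => t ^ i)
    rw [pairB_apply, pairB_apply] at h
    have h1 : Finsupp.linearCombination ℂ (φ (eT j)).1 (0 : ℕ →₀ ℂ) = 0 := by simp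
    have h2 : Finsupp.linearCombination ℂ (eT j).1 (ψ (0, fun i => t ^ i)).1
        = (ψ (0, fun i => t ^ i)).1 j := lc_single_fun _ j
    have h3 : Finsupp.linearCombination ℂ ((ψ (0, fun i => t ^ i)).2) (eT j).2 = 0 := by
      simp [eT]
    rw [h1, h2, h3, zero_add, add_zero] at h
    rw [← h, Polynomial.eval_eq_sum, Polynomial.sum_def, lc_sum]
    simp [Polynomial.coeff_ofFinsupp, Polynomial.support_ofFinsupp]
    rfl
  have hS : {j | c j ≠ 0}.Finite := by
    by_contra hinf
    -- choose t avoiding all roots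
    set bad : Set ℂ := ⋃ j ∈ {j | c j ≠ 0}, {t | Polynomial.IsRoot (⟨AddMonoidAlgebra.ofCoeff (c j)⟩ : Polynomial ℂ) t}
      with hbad
    have hbadc : bad.Countable := by
      refine Set.Countable.biUnion (Set.to_countable _) ?_
      intro j hj
      exact (Polynomial.finite_setOf_isRoot (by
        simpa [Polynomial.ofFinsupp_eq_zero] using hj)).countable
    have : ∃ t : ℂ, t ∉ bad := by
      by_contra hall
      push_neg at hall
      have : (Set.univ : Set ℂ).Countable := by
        rw [Set.eq_univ_of_forall hall] at hbadc; exact hbadc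
      have hcc : Countable ℂ := Set.countable_univ_iff.mp this
      have : Uncountable ℂ :=
        Function.Injective.uncountable (f := (Complex.ofReal : ℝ → ℂ))
          Complex.ofReal_injective
      exact (not_countable (α := ℂ)) hcc
    obtain ⟨t, ht⟩ := this
    have hsub : {j | c j ≠ 0} ⊆ ((ψ (0, fun i => t ^ i)).1.support : Set ℕ) := by
      intro j hj
      have hroot : ¬ Polynomial.IsRoot (⟨AddMonoidAlgebra.ofCoeff (c j)⟩ : Polynomial ℂ) t := by
        intro hr
        exact ht (Set.mem_biUnion hj hr)
      simp only [Finset.coe_sort_coe, Finset.mem_coe, Finsupp.mem_support_iff]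
      rw [← hPeval t j]
      exact hroot
    exact hinf (Set.Finite.subset ((ψ (0, fun i => t ^ i)).1.support).finite_toSet hsub)
  have hC : {q : ℕ × ℕ | C q.1 q.2 ≠ 0}.Finite := by
    have hsub : {q : ℕ × ℕ | C q.1 q.2 ≠ 0} ⊆
        (⋃ j ∈ {j | c j ≠ 0}, ((c j).support : Set ℕ)) ×ˢ {j | c j ≠ 0} := by
      rintro ⟨i, j⟩ hq
      simp only [Set.mem_setOf_eq] at hq
      rw [vC] at hq
      have hcj : c j ≠ 0 := by
        intro h0
        apply hq
        show (c j) i = 0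
        rw [h0]; rfl
      constructor
      · exact Set.mem_biUnion hcj (by simpa [Finsupp.mem_support_iff, hcdef] using hq)
      · exact hcj
    exact Set.Finite.subset (Set.Finite.prod
      (Set.Finite.biUnion hS fun j _ => ((c j).support).finite_toSet) hS) hsub
  exact ⟨A, B, C, D, hA, hD, hC, fun x => ⟨f1 x, f2 x⟩⟩

/-! ### Backward direction: adjoint from matrix representation -/

theorem adjoint_of_rep (φ : TT ≃ₗ[ℂ] TT) (A B C D : ℕ → ℕ → ℂ)
    (h : RepBy φ.toLinearMap A B C D) :
    ∃ ψ₀ : RR →ₗ[ℂ] RR, ∀ x y, pairB (φ x) y = pairB x (ψ₀ y) := by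
  classical
  obtain ⟨hA, hD, hC, hform⟩ := h
  have hform' : ∀ x : TT,
      (∀ i, (φ x).1 i = (∑ᶠ j, A i j * x.1 j) + ∑ᶠ j, B i j * x.2 j) ∧
      (∀ i, (φ x).2 i = (∑ᶠ j, C i j * x.1 j) + ∑ᶠ j, D i j * x.2 j) := hform
  -- values on basis elements
  have vA : ∀ j i, (φ (eT j)).1 i = A i j := by
    intro j i
    rw [(hform' (eT j)).1 i]
    have h2 : (∑ᶠ k, B i k * ((eT j).2 : ℕ → ℂ) k) = 0 :=
      finsum_eq_zero_of_forall_eq_zero fun k => by simp [eT]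
    have h1 : (∑ᶠ k, A i k * (eT j).1 k) = A i j := by
      rw [finsum_eq_single _ j]
      · simp [eT]
      · intro b hb; simp [eT, Finsupp.single_apply, Ne.symm hb]
    rw [h1, h2, add_zero]
  have vC : ∀ j i, (φ (eT j)).2 i = C i j := by
    intro j i
    rw [(hform' (eT j)).2 i]
    have h2 : (∑ᶠ k, D i k * ((eT j).2 : ℕ → ℂ) k) = 0 :=
      finsum_eq_zero_of_forall_eq_zero fun k => by simp [eT]
    have h1 : (∑ᶠ k, C i k * (eT j).1 k) = C i j := by
      rw [finsum_eq_single _ j]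
      · simp [eT]
      · intro b hb; simp [eT, Finsupp.single_apply, Ne.symm hb]
    rw [h1, h2, add_zero]
  set Wf : RR → ℕ → ℂ := fun y j => pairB (φ (eT j)) y with hWf
  set Nf : RR → ℕ → ℂ := fun y j => pairB (φ (fT j)) y with hNf
  have Wf_eq : ∀ y j, Wf y j
      = (∑ i ∈ y.1.support, y.1 i * A i j) + ∑ᶠ i, C i j * y.2 i := by
    intro y j
    rw [hWf]
    simp only [pairB_apply]
    rw [lc_sum, lc_finsum]
    congr 1
    · exact Finset.sum_congr rfl fun i _ => by rw [vA]
    · exact finsum_congr fun i => by rw [vC]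
  -- finite index sets
  set JC : Finset ℕ := hC.toFinset.image Prod.snd with hJC
  set IC : Finset ℕ := hC.toFinset.image Prod.fst with hIC
  have hCz : ∀ {i j : ℕ}, C i j ≠ 0 → i ∈ IC ∧ j ∈ JC := by
    intro i j hne
    exact ⟨Finset.mem_image.mpr ⟨(i,j), hC.mem_toFinset.mpr hne, rfl⟩,
      Finset.mem_image.mpr ⟨(i,j), hC.mem_toFinset.mpr hne, rfl⟩⟩
  have hWsupp : ∀ y : RR, Function.support (Wf y)
      ⊆ ((y.1.support.biUnion fun i => (hA i).toFinset) ∪ JC : Finset ℕ) := by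
    intro y j hj
    have hj' : Wf y j ≠ 0 := hj
    rw [Finset.coe_union, Set.mem_union, Finset.mem_coe, Finset.mem_coe]
    by_contra hnot
    push_neg at hnot
    obtain ⟨hja, hjc⟩ := hnot
    apply hj'
    rw [Wf_eq]
    have t1 : (∑ i ∈ y.1.support, y.1 i * A i j) = 0 := by
      refine Finset.sum_eq_zero fun i hi => ?_
      have : A i j = 0 := by
        by_contra hne
        exact hja (Finset.mem_biUnion.mpr ⟨i, hi, (hA i).mem_toFinset.mpr hne⟩)
      rw [this, mul_zero]
    have t2 : (∑ᶠ i, C i j * y.2 i) = 0 := by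
      refine finsum_eq_zero_of_forall_eq_zero fun i => ?_
      have : C i j = 0 := by
        by_contra hne
        exact hjc (hCz hne).2
      rw [this, zero_mul]
    rw [t1, t2, add_zero]
  have hWfin : ∀ y : RR, (Function.support (Wf y)).Finite := fun y =>
    Set.Finite.subset (Finset.finite_toSet _) (hWsupp y)
  have hWcoe : ∀ (y : RR) (j : ℕ), (Finsupp.ofSupportFinite (Wf y) (hWfin y)) j = Wf y j :=
    fun y j => congrFun (Finsupp.ofSupportFinite_coe (hf := hWfin y)) j
  -- the key identity
  have key : ∀ (x : TT) (y : RR),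
      pairB (φ x) y = (∑ᶠ j, Wf y j * x.1 j) + ∑ᶠ j, x.2 j * Nf y j := by
    intro x y
    have hxdec : x = ((x.1, (0:ℕ→₀ℂ)) : TT) + (((0:ℕ→ℂ), x.2) : TT) := by
      apply Prod.ext <;> simp
    have hsplit : pairB (φ x) y = pairB (φ (x.1, 0)) y + pairB (φ ((0:ℕ→ℂ), x.2)) y := by
      conv_lhs => rw [hxdec]
      rw [map_add, map_add, LinearMap.add_apply]
    rw [hsplit]
    congr 1
    · -- ω-part
      set ω : ℕ → ℂ := x.1 with hω
      set sw := y.1.support with hsw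
      set JA : Finset ℕ := sw.biUnion fun i => (hA i).toFinset with hJA
      set J : Finset ℕ := JA ∪ JC with hJ
      have g1 : ∀ i, (φ ((ω, 0) : TT)).1 i = ∑ᶠ j, A i j * ω j := by
        intro i
        rw [(hform' (ω, (0:ℕ→₀ℂ))).1 i]
        have : (∑ᶠ k, B i k * ((0:ℕ→₀ℂ) : ℕ → ℂ) k) = 0 :=
          finsum_eq_zero_of_forall_eq_zero fun k => by simp
        rw [this, add_zero]
      have g2 : ∀ i, (φ ((ω, 0) : TT)).2 i = ∑ᶠ j, C i j * ω j := by
        intro i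
        rw [(hform' (ω, (0:ℕ→₀ℂ))).2 i]
        have : (∑ᶠ k, D i k * ((0:ℕ→₀ℂ) : ℕ → ℂ) k) = 0 :=
          finsum_eq_zero_of_forall_eq_zero fun k => by simp
        rw [this, add_zero]
      -- RHS as a finite sum over J
      have hRHS : (∑ᶠ j, Wf y j * ω j) = ∑ j ∈ J, Wf y j * ω j := by
        refine finsum_eq_sum_of_support_subset _ ?_
        intro j hj
        have : Wf y j ≠ 0 := by
          intro h0
          simp only [Function.mem_support, h0, zero_mul, ne_eq, not_true_eq_false] at hj
        exact hWsupp y this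
      rw [hRHS]
      have hWsum : ∀ j, Wf y j * ω j
          = (∑ i ∈ sw, y.1 i * A i j) * ω j + (∑ᶠ i, C i j * y.2 i) * ω j := by
        intro j; rw [Wf_eq, add_mul]
      rw [Finset.sum_congr rfl fun j _ => hWsum j, Finset.sum_add_distrib]
      -- LHS expansion
      have hLHS : pairB (φ ((ω, 0) : TT)) y
          = (∑ i ∈ sw, y.1 i * ∑ᶠ j, A i j * ω j)
            + ∑ᶠ i, (∑ᶠ j, C i j * ω j) * y.2 i := by
        rw [pairB_apply, lc_sum, lc_finsum]
        congr 1
        · exact Finset.sum_congr rfl fun i _ => by rw [g1]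
        · exact finsum_congr fun i => by rw [g2]
      rw [hLHS]
      congr 1
      · -- A part
        have inner : ∀ i ∈ sw, (∑ᶠ j, A i j * ω j) = ∑ j ∈ J, A i j * ω j := by
          intro i hi
          refine finsum_eq_sum_of_support_subset _ ?_
          intro j hj
          have hne : A i j ≠ 0 := fun h0 => by
            simp [Function.mem_support, h0] at hj
          exact Finset.mem_coe.mpr (Finset.mem_union_left _
            (Finset.mem_biUnion.mpr ⟨i, hi, (hA i).mem_toFinset.mpr hne⟩))
        calc ∑ i ∈ sw, y.1 i * ∑ᶠ j, A i j * ω j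
            = ∑ i ∈ sw, ∑ j ∈ J, y.1 i * (A i j * ω j) :=
              Finset.sum_congr rfl (fun i hi => by rw [inner i hi, Finset.mul_sum])
          _ = ∑ j ∈ J, ∑ i ∈ sw, y.1 i * (A i j * ω j) := Finset.sum_comm
          _ = ∑ j ∈ J, (∑ i ∈ sw, y.1 i * A i j) * ω j :=
              Finset.sum_congr rfl (fun j _ => by
                rw [Finset.sum_mul]
                exact Finset.sum_congr rfl fun i _ => by ring)
      · -- C part
        have outer : (∑ᶠ i, (∑ᶠ j, C i j * ω j) * y.2 i)
            = ∑ i ∈ IC, (∑ᶠ j, C i j * ω j) * y.2 i := by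
          refine finsum_eq_sum_of_support_subset _ ?_
          intro i hi
          by_contra hnot
          apply hi
          have hz : ∀ j, C i j = 0 := fun j => by
            by_contra hne
            exact hnot (Finset.mem_coe.mpr (hCz hne).1)
          show (∑ᶠ j, C i j * ω j) * y.2 i = 0
          have : (∑ᶠ j, C i j * ω j) = 0 :=
            finsum_eq_zero_of_forall_eq_zero fun j => by rw [hz j, zero_mul]
          rw [this, zero_mul]
        rw [outer]
        have innerC : ∀ i, (∑ᶠ j, C i j * ω j) = ∑ j ∈ J, C i j * ω j := by
          intro i
          refine finsum_eq_sum_of_support_subset _ ?_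
          intro j hj
          have hne : C i j ≠ 0 := fun h0 => by
            simp [Function.mem_support, h0] at hj
          exact Finset.mem_coe.mpr (Finset.mem_union_right _ (hCz hne).2)
        have innerC2 : ∀ j, (∑ᶠ i, C i j * y.2 i) = ∑ i ∈ IC, C i j * y.2 i := by
          intro j
          refine finsum_eq_sum_of_support_subset _ ?_
          intro i hi
          have hne : C i j ≠ 0 := fun h0 => by
            simp [Function.mem_support, h0] at hi
          exact Finset.mem_coe.mpr (hCz hne).1
        calc ∑ i ∈ IC, (∑ᶠ j, C i j * ω j) * y.2 i
            = ∑ i ∈ IC, ∑ j ∈ J, (C i j * y.2 i) * ω j :=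
              Finset.sum_congr rfl (fun i _ => by
                rw [innerC i, Finset.sum_mul]
                exact Finset.sum_congr rfl fun j _ => by ring)
          _ = ∑ j ∈ J, ∑ i ∈ IC, (C i j * y.2 i) * ω j := Finset.sum_comm
          _ = ∑ j ∈ J, (∑ i ∈ IC, C i j * y.2 i) * ω j :=
              Finset.sum_congr rfl (fun j _ => by rw [Finset.sum_mul])
          _ = ∑ j ∈ J, (∑ᶠ i, C i j * y.2 i) * ω j :=
              Finset.sum_congr rfl (fun j _ => by rw [innerC2 j])
    · -- u-part
      have hdec2 : (((0:ℕ→ℂ), x.2) : TT) = ∑ j ∈ x.2.support, x.2 j • fT j := by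
        apply Prod.ext
        · rw [Prod.fst_sum]
          simp [fT]
        · rw [Prod.snd_sum]
          simp only [fT, Prod.smul_snd, Finsupp.smul_single, smul_eq_mul, mul_one]
          exact (Finsupp.sum_single x.2).symm.trans (by rw [Finsupp.sum])
      rw [hdec2, map_sum, map_sum, LinearMap.sum_apply]
      rw [finsum_eq_sum_of_support_subset (fun j => x.2 j * Nf y j) (s := x.2.support)
        (by intro j hj
            have : x.2 j ≠ 0 := fun h0 => by simp [Function.mem_support, h0] at hj
            exact Finset.mem_coe.mpr (Finsupp.mem_support_iff.mpr this))]
      refine Finset.sum_congr rfl fun j _ => ?_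
      rw [map_smul, map_smul, LinearMap.smul_apply, smul_eq_mul]
  -- assemble the linear map
  set Wlin : RR →ₗ[ℂ] (ℕ →₀ ℂ) :=
    { toFun := fun y => Finsupp.ofSupportFinite (Wf y) (hWfin y)
      map_add' := fun y y' => by
        refine Finsupp.ext fun j => ?_
        rw [Finsupp.add_apply, hWcoe, hWcoe, hWcoe]
        exact (pairB (φ (eT j))).map_add y y'
      map_smul' := fun c y => by
        refine Finsupp.ext fun j => ?_
        rw [RingHom.id_apply, Finsupp.smul_apply, hWcoe, hWcoe]
        exact (pairB (φ (eT j))).map_smul c y } with hWlin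
  set Nlin : RR →ₗ[ℂ] (ℕ → ℂ) :=
    LinearMap.pi (fun j => (pairB (φ (fT j)) : RR →ₗ[ℂ] ℂ)) with hNlin
  refine ⟨LinearMap.prod Wlin Nlin, ?_⟩
  intro x y
  rw [key x y, pairB_apply, LinearMap.prod_apply, lc_finsum, lc_finsum]
  congr 1

end
end MyAux

/-- A linear automorphism `φ` of `T` belongs to `G(T,R)` (i.e., admits a compatible `φ̄`)
iff both `φ` and `φ^{-1}` are represented by matrix quadruples as above. -/
theorem stmt13 (φ : TT ≃ₗ[ℂ] TT) :
    (∃ ψ : RR ≃ₗ[ℂ] RR, IsMackey φ ψ) ↔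
      ((∃ A B C D, RepBy φ.toLinearMap A B C D) ∧
       (∃ A B C D, RepBy φ.symm.toLinearMap A B C D)) := by
  constructor
  · rintro ⟨ψ, hM⟩
    refine ⟨rep_of_mackey φ ψ hM, ?_⟩
    have hM' : IsMackey φ.symm ψ.symm := by
      intro x y
      have h := hM (φ.symm x) (ψ.symm y)
      rw [LinearEquiv.apply_symm_apply, LinearEquiv.apply_symm_apply] at h
      exact h.symm
    exact rep_of_mackey φ.symm ψ.symm hM'
  · rintro ⟨⟨A, B, C, D, h1⟩, ⟨A', B', C', D', h2⟩⟩
    obtain ⟨ψ₀, hψ₀⟩ := adjoint_of_rep φ A B C D h1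
    obtain ⟨χ₀, hχ₀⟩ := adjoint_of_rep φ.symm A' B' C' D' h2
    have hinv2 : ∀ y, ψ₀ (χ₀ y) = y := by
      intro y
      refine pairB_right_inj fun x => ?_
      have e1 := hψ₀ x (χ₀ y)
      have e2 := hχ₀ (φ x) y
      rw [LinearEquiv.symm_apply_apply] at e2
      exact e1.symm.trans e2.symm
    have hinv1 : ∀ y, χ₀ (ψ₀ y) = y := by
      intro y
      refine pairB_right_inj fun x => ?_
      have e1 := hχ₀ x (ψ₀ y)
      have e2 := hψ₀ (φ.symm x) y
      rw [LinearEquiv.apply_symm_apply] at e2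
      exact e1.symm.trans e2.symm
    refine ⟨LinearEquiv.ofLinear ψ₀ χ₀ (LinearMap.ext hinv2) (LinearMap.ext hinv1), ?_⟩
    intro x y
    rw [LinearEquiv.ofLinear_apply]
    exact hψ₀ x y
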